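/- Let R be a finite ring. Then the category OVI(R) is quasi-Gröbner; in particular, for every noetherian commutative ring k, the category of OVI(R)-modules over k is locally noetherian. -/

import Mathlib

open CategoryTheory

universe u

/-- The (skeletal model of the) category `OI` of finite totally ordered sets and
order-preserving injections: the object `n` represents `[n] = {1, …, n}`, and a
morphism `n ⟶ m` is an order-preserving injection `Fin n ↪o Fin m`. -/
def OI : Type := ℕ

namespace OI

/-- Build an object of `OI` from a natural number. -/
def mk (n : ℕ) : OI := n

/-- The underlying natural number of an object of `OI`. -/
def len (n : OI) : ℕ := n

instance : Category OI where
  Hom n m := Fin n.len ↪o Fin m.len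
  id _ := RelEmbedding.refl _
  comp f g := f.trans g
  id_comp _ := rfl
  comp_id _ := rfl
  assoc _ _ _ := rfl

/-- The order embedding underlying a morphism of `OI`. -/
def emb {n m : OI} (f : n ⟶ m) : Fin n.len ↪o Fin m.len := f

@[ext]
theorem hom_ext {n m : OI} (f g : n ⟶ m) (h : ∀ i, emb f i = emb g i) : f = g :=
  RelEmbedding.ext h

end OI

/-- A module over a category `C` (a functor `C ⥤ Mod_k`) is finitely generated if there
are finitely many elements `mᵢ ∈ M xᵢ` whose images under all morphisms span every `M y`;
equivalently, `M` is a quotient of a finite direct sum of principal projectives. -/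
def CatModule.FG {C : Type*} [Category C] {k : Type u} [CommRing k]
    (M : C ⥤ ModuleCat.{u} k) : Prop :=
  ∃ (r : ℕ) (x : Fin r → C) (m : ∀ i, M.obj (x i)),
    ∀ y : C, Submodule.span k
      {v : M.obj y | ∃ (i : Fin r) (f : x i ⟶ y), M.map f (m i) = v} = ⊤

section OVIDef

variable {R : Type u} [Ring R]

theorem linearMap_apply_eq_sum {n m : ℕ} (ψ : (Fin n → R) →ₗ[R] (Fin m → R))
    (w : Fin n → R) (s : Fin m) :
    ψ w s = ∑ r : Fin n, w r * ψ (Pi.single r 1) s := by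
  have hw : w = ∑ r : Fin n, (w r) • (Pi.single r (1 : R) : Fin n → R) := by
    funext x
    simp [Finset.sum_apply, Pi.single_apply, mul_ite]
  conv_lhs => rw [hw]
  rw [map_sum]
  simp [Finset.sum_apply, smul_eq_mul]

/-- A linear map between ordered free `R`-modules is a morphism of `OVI(R)` if there is
an order-preserving injection `f₀` of the index sets such that the `i`-th basis vector is
sent to the `f₀(i)`-th basis vector plus lower order terms. -/
def IsOVIHom {n m : ℕ} (φ : (Fin n → R) →ₗ[R] (Fin m → R)) : Prop :=
  ∃ f : Fin n ↪o Fin m, ∀ i : Fin n,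
    φ (Pi.single i 1) (f i) = 1 ∧ ∀ r : Fin m, f i < r → φ (Pi.single i 1) r = 0

theorem isOVIHom_id (n : ℕ) : IsOVIHom (LinearMap.id : (Fin n → R) →ₗ[R] (Fin n → R)) := by
  refine ⟨RelEmbedding.refl _, fun i => ⟨Pi.single_eq_same i 1, fun r hr => ?_⟩⟩
  exact Pi.single_eq_of_ne hr.ne' 1

theorem isOVIHom_comp {n m p : ℕ} {φ : (Fin n → R) →ₗ[R] (Fin m → R)}
    {ψ : (Fin m → R) →ₗ[R] (Fin p → R)} (hφ : IsOVIHom φ) (hψ : IsOVIHom ψ) :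
    IsOVIHom (ψ ∘ₗ φ) := by
  obtain ⟨f, hf⟩ := hφ
  obtain ⟨g, hg⟩ := hψ
  refine ⟨f.trans g, fun i => ?_⟩
  have key : ∀ s : Fin p, (ψ ∘ₗ φ) (Pi.single i 1) s
      = ∑ r : Fin m, φ (Pi.single i 1) r * ψ (Pi.single r 1) s := fun s =>
    linearMap_apply_eq_sum ψ (φ (Pi.single i 1)) s
  constructor
  · have h1 : ∀ r : Fin m, r ∈ Finset.univ → r ≠ f i →
        φ (Pi.single i 1) r * ψ (Pi.single r 1) (g (f i)) = 0 := by
      intro r _ hr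
      rcases lt_or_gt_of_ne hr with h | h
      · have h2 : ψ (Pi.single r 1) (g (f i)) = 0 := (hg r).2 _ (g.strictMono h)
        rw [h2, mul_zero]
      · have h2 : φ (Pi.single i 1) r = 0 := (hf i).2 r h
        rw [h2, zero_mul]
    have h3 : ∑ r : Fin m, φ (Pi.single i 1) r * ψ (Pi.single r 1) (g (f i)) = 1 := by
      rw [Finset.sum_eq_single (f i) (fun r hmem hr => h1 r hmem hr) (by simp),
        (hf i).1, (hg (f i)).1, one_mul]
    exact (key (g (f i))).trans h3
  · intro s hs
    have h0 : ∑ r : Fin m, φ (Pi.single i 1) r * ψ (Pi.single r 1) s = 0 := by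
      apply Finset.sum_eq_zero
      intro r _
      rcases le_or_gt r (f i) with h | h
      · have h2 : ψ (Pi.single r 1) s = 0 := (hg r).2 s (lt_of_le_of_lt (g.monotone h) hs)
        rw [h2, mul_zero]
      · have h2 : φ (Pi.single i 1) r = 0 := (hf i).2 r h
        rw [h2, zero_mul]
    exact (key s).trans h0

end OVIDef

/-- The (skeletal model of the) category `OVI(R)` of finite rank free left `R`-modules
with a totally ordered basis: the object `n` represents `R^n` with its standard ordered
basis, and morphisms are the `R`-linear maps that send each basis vector to a basis
vector plus lower order terms (for an order-preserving injection of the index sets). -/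
def OVI (R : Type u) [Ring R] : Type := ℕ

namespace OVI

variable {R : Type u} [Ring R]

/-- Build an object of `OVI R` from a natural number. -/
def mk (R : Type u) [Ring R] (n : ℕ) : OVI R := n

/-- The rank of an object of `OVI R`. -/
def len (n : OVI R) : ℕ := n

instance : Category (OVI R) where
  Hom n m := { φ : (Fin n.len → R) →ₗ[R] (Fin m.len → R) // IsOVIHom φ }
  id n := ⟨LinearMap.id, isOVIHom_id n.len⟩
  comp φ ψ := ⟨ψ.1 ∘ₗ φ.1, isOVIHom_comp φ.2 ψ.2⟩
  id_comp _ := Subtype.ext (LinearMap.comp_id _)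
  comp_id _ := Subtype.ext (LinearMap.id_comp _)
  assoc _ _ _ := Subtype.ext (LinearMap.comp_assoc _ _ _).symm

/-- The linear map underlying a morphism of `OVI R`. -/
def toLinear {n m : OVI R} (φ : n ⟶ m) : (Fin n.len → R) →ₗ[R] (Fin m.len → R) :=
  (φ : { φ : (Fin n.len → R) →ₗ[R] (Fin m.len → R) // IsOVIHom φ }).1

end OVI

/-- The category of `OVI(R)`-modules over `k` is locally noetherian: every submodule of
a finitely generated `OVI(R)`-module is finitely generated. -/
def OVIModulesLocallyNoetherian (R : Type u) [Ring R] (k : Type u) [CommRing k] : Prop :=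
  ∀ (M N : OVI R ⥤ ModuleCat.{u} k) (ι : N ⟶ M), CategoryTheory.Mono ι →
    CatModule.FG M → CatModule.FG N

section Grobner

open CategoryTheory

variable (C : Type v) [Category.{w} C]

/-- A functor `Φ : C ⥤ D` satisfies property (F) if for every `y : D` there are finitely
many objects `x₁, …, xₙ : C` and morphisms `fᵢ : y ⟶ Φ xᵢ` such that every morphism
`f : y ⟶ Φ x` factors as `f = fᵢ ≫ Φ g` for some `i` and some `g : xᵢ ⟶ x`. -/
def PropertyF {C : Type v} [Category.{w} C] {D : Type v'} [Category.{w'} D]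
    (Φ : C ⥤ D) : Prop :=
  ∀ y : D, ∃ (n : ℕ) (x : Fin n → C) (t : ∀ i, y ⟶ Φ.obj (x i)),
    ∀ (z : C) (f : y ⟶ Φ.obj z), ∃ (i : Fin n) (g : x i ⟶ z), f = t i ≫ Φ.map g

/-- A category `C` is Gröbner: it is essentially small (with a family of isomorphism
class representatives `obj : I → C`), and for every object `x` the poset `|S_x|` of
morphisms out of `x` (ordered by `f ⪯ g` iff `g = f ≫ h` for some `h`) is noetherian and
admits a total ordering compatible with left composition whose restriction to each
hom-set is a well-ordering. -/
def IsGrobner : Prop :=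
  ∃ (I : Type v) (obj : I → C),
    (∀ c : C, ∃! i : I, Nonempty (obj i ≅ c)) ∧
    ∀ x : C,
      (∀ s : ℕ → Σ i : I, (x ⟶ obj i), ∃ a b : ℕ, a < b ∧
        ∃ h : obj (s a).1 ⟶ obj (s b).1, (s b).2 = (s a).2 ≫ h) ∧
      (∃ r : (Σ i : I, (x ⟶ obj i)) → (Σ i : I, (x ⟶ obj i)) → Prop,
        IsLinearOrder _ r ∧
        (∀ (i j : I) (f g : x ⟶ obj i) (h : obj i ⟶ obj j),
          r ⟨i, f⟩ ⟨i, g⟩ → r ⟨j, f ≫ h⟩ ⟨j, g ≫ h⟩) ∧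
        ∀ i : I, WellFounded (fun f g : x ⟶ obj i => r ⟨i, f⟩ ⟨i, g⟩ ∧ f ≠ g))

/-- A category is quasi-Gröbner if it admits an essentially surjective functor
satisfying property (F) from a Gröbner category. -/
def IsQuasiGrobner : Prop :=
  ∃ (C' : Cat.{w, v}) (F : C' ⥤ C), IsGrobner C' ∧ F.EssSurj ∧ PropertyF F

end Grobner

/-! ### Auxiliary development -/

section Positional

open Finset

/-- Value of a positional (base `B`) numeral with digits `v` of length `len`. -/
def posVal (v : ℕ → ℕ) (len B : ℕ) : ℕ := ∑ i ∈ Finset.range len, v i * B ^ i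

theorem pos_sum_lt {W m : ℕ} {d : ℕ → ℕ} (hd : ∀ j < m, d j < W) :
    posVal d m W < W ^ m := by
  unfold posVal
  induction m with
  | zero => simp
  | succ m ih =>
    have h1 : ∑ j ∈ Finset.range m, d j * W ^ j < W ^ m :=
      ih fun j hj => hd j (hj.trans (Nat.lt_succ_self m))
    have h2 : d m < W := hd m (Nat.lt_succ_self m)
    rw [Finset.sum_range_succ, pow_succ]
    calc ∑ j ∈ Finset.range m, d j * W ^ j + d m * W ^ m
        < W ^ m + d m * W ^ m := by omega
      _ = (d m + 1) * W ^ m := by ring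
      _ ≤ W * W ^ m := Nat.mul_le_mul_right _ (by omega)
      _ = W ^ m * W := by ring

theorem pos_sum_lt_of_top {W m : ℕ} {d d' : ℕ → ℕ} {j0 : ℕ} (hj0 : j0 < m)
    (hlt : d j0 < d' j0) (hagree : ∀ j, j0 < j → j < m → d j = d' j)
    (hd : ∀ j < m, d j < W) :
    posVal d m W < posVal d' m W := by
  unfold posVal
  have hsplit : ∀ e : ℕ → ℕ, ∑ j ∈ Finset.range m, e j * W ^ j
      = ∑ j ∈ Finset.range (j0+1), e j * W ^ j + ∑ j ∈ Finset.Ico (j0+1) m, e j * W ^ j := by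
    intro e
    rw [Finset.range_eq_Ico, ← Finset.sum_Ico_consecutive _ (Nat.zero_le _) hj0, Finset.range_eq_Ico]
  have htail : ∑ j ∈ Finset.Ico (j0+1) m, d j * W ^ j
      = ∑ j ∈ Finset.Ico (j0+1) m, d' j * W ^ j := by
    refine Finset.sum_congr rfl fun j hj => ?_
    rw [Finset.mem_Ico] at hj
    rw [hagree j hj.1 hj.2]
  rw [hsplit d, hsplit d', htail]
  have hhead : ∑ j ∈ Finset.range (j0+1), d j * W ^ j
      < ∑ j ∈ Finset.range (j0+1), d' j * W ^ j := by
    rw [Finset.sum_range_succ]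
    have h1 : ∑ j ∈ Finset.range j0, d j * W ^ j < W ^ j0 :=
      pos_sum_lt fun j hj => hd j (hj.trans hj0)

    have h2 : d' j0 * W ^ j0 ≤ ∑ j ∈ Finset.range (j0+1), d' j * W ^ j := by
      rw [Finset.sum_range_succ]; omega
    have h3 : (d j0 + 1) * W ^ j0 ≤ d' j0 * W ^ j0 := Nat.mul_le_mul_right _ (by omega)
    calc ∑ j ∈ Finset.range j0, d j * W ^ j + d j0 * W ^ j0
        < W ^ j0 + d j0 * W ^ j0 := by omega
      _ = (d j0 + 1) * W ^ j0 := by ring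
      _ ≤ d' j0 * W ^ j0 := h3
      _ ≤ _ := h2
  omega

theorem pos_digits_eq {W m : ℕ} {d d' : ℕ → ℕ} (hd : ∀ j < m, d j < W)
    (hd' : ∀ j < m, d' j < W)
    (hsum : posVal d m W = posVal d' m W) :
    ∀ j < m, d j = d' j := by
  unfold posVal at hsum
  by_contra hne
  push_neg at hne
  obtain ⟨j, hjm, hj⟩ := hne
  have hS : ((Finset.range m).filter (fun j => d j ≠ d' j)).Nonempty :=
    ⟨j, Finset.mem_filter.2 ⟨Finset.mem_range.2 hjm, hj⟩⟩
  set j0 := ((Finset.range m).filter (fun j => d j ≠ d' j)).max' hS with hj0def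
  have hj0mem := ((Finset.range m).filter (fun j => d j ≠ d' j)).max'_mem hS
  rw [Finset.mem_filter, Finset.mem_range] at hj0mem
  have hagree : ∀ i, j0 < i → i < m → d i = d' i := by
    intro i hji him
    by_contra hne2
    exact absurd (Finset.le_max' _ i (Finset.mem_filter.2 ⟨Finset.mem_range.2 him, hne2⟩))
      (not_le.2 hji)
  rcases Nat.lt_or_ge (d j0) (d' j0) with h | h
  · exact absurd hsum (Nat.ne_of_lt (pos_sum_lt_of_top hj0mem.1 h hagree hd))
  · rcases Nat.lt_or_ge (d' j0) (d j0) with h2 | h2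
    · exact absurd hsum.symm
        (Nat.ne_of_lt (pos_sum_lt_of_top hj0mem.1 h2 (fun i h1 h2 => (hagree i h1 h2).symm) hd'))
    · exact hj0mem.2 (le_antisymm h2 h)

end Positional

section OMCat

open CategoryTheory Matrix

variable {R : Type u} [Ring R]

/-- Morphisms of the rigidified category `OM R`: an order-embedding together with a
"reduced" matrix. The matrix `A` has rows indexed by the source, `A i` being the image of
the `i`-th basis vector; the pivot columns are exactly the standard basis vectors. -/
@[ext]
structure OMHom (R : Type u) [Ring R] (n m : ℕ) : Type u where
  f : Fin n ↪o Fin m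
  A : Matrix (Fin n) (Fin m) R
  hpivot : ∀ i i', A i (f i') = if i' = i then 1 else 0
  hzero : ∀ i j, f i < j → A i j = 0

/-- The objects of the rigidified category over `OVI R`. -/
def OM (R : Type u) [Ring R] : Type := ℕ

namespace OM

/-- Build an object of `OM R`. -/
@[reducible] def mk (R : Type u) [Ring R] (n : ℕ) : OM R := n

/-- The rank of an object of `OM R`. -/
@[reducible] def len (n : OM R) : ℕ := n

theorem comp_hpivot {n m p : ℕ} (φ : OMHom R n m) (ψ : OMHom R m p) :
    ∀ i i', (φ.A * ψ.A) i ((φ.f.trans ψ.f) i') = if i' = i then 1 else 0 := by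
  intro i i'
  have : ∀ j, φ.A i j * ψ.A j (ψ.f (φ.f i')) = φ.A i j * (if φ.f i' = j then 1 else 0) := by
    intro j
    rw [ψ.hpivot j (φ.f i')]
  rw [Matrix.mul_apply]
  simp only [RelEmbedding.coe_trans, Function.comp_apply]
  rw [Finset.sum_congr rfl fun j _ => this j]
  rw [Finset.sum_eq_single (φ.f i')]
  · simp [φ.hpivot i i']
  · intro j _ hj
    simp [Ne.symm hj]
  · simp

theorem comp_hzero {n m p : ℕ} (φ : OMHom R n m) (ψ : OMHom R m p) :
    ∀ i t, (φ.f.trans ψ.f) i < t → (φ.A * ψ.A) i t = 0 := by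
  intro i t ht
  rw [Matrix.mul_apply]
  refine Finset.sum_eq_zero fun j _ => ?_
  rcases le_or_gt j (φ.f i) with h | h
  · have : ψ.f j ≤ ψ.f (φ.f i) := ψ.f.monotone h
    rw [ψ.hzero j t (lt_of_le_of_lt this ht), mul_zero]
  · rw [φ.hzero i j h, zero_mul]

instance : Category (OM R) where
  Hom n m := OMHom R n.len m.len
  id n := ⟨RelEmbedding.refl _, 1, fun i i' => by simp [Matrix.one_apply, eq_comm], fun i j h => by
    simp only [RelEmbedding.refl_apply] at h
    exact Matrix.one_apply_ne (ne_of_lt h)⟩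
  comp φ ψ := ⟨φ.f.trans ψ.f, φ.A * ψ.A, comp_hpivot φ ψ, comp_hzero φ ψ⟩
  id_comp φ := by
    refine OMHom.ext ?_ ?_
    · rfl
    · exact Matrix.one_mul _
  comp_id φ := by
    refine OMHom.ext ?_ ?_
    · rfl
    · exact Matrix.mul_one _
  assoc φ ψ χ := by
    refine OMHom.ext ?_ ?_
    · rfl
    · exact Matrix.mul_assoc _ _ _

theorem comp_f {n m p : OM R} (φ : n ⟶ m) (ψ : m ⟶ p) :
    (φ ≫ ψ).f = φ.f.trans ψ.f := rfl

theorem comp_A {n m p : OM R} (φ : n ⟶ m) (ψ : m ⟶ p) :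
    (φ ≫ ψ).A = φ.A * ψ.A := rfl

theorem id_f (n : OM R) : (𝟙 n : n ⟶ n).f = RelEmbedding.refl _ := rfl

theorem id_A (n : OM R) : (𝟙 n : n ⟶ n).A = 1 := rfl

theorem hom_ext {n m : OM R} {φ ψ : n ⟶ m} (hf : φ.f = ψ.f) (hA : φ.A = ψ.A) : φ = ψ :=
  OMHom.ext hf hA

end OM

end OMCat
section OMFunctor

open CategoryTheory Matrix

variable {R : Type u} [Ring R]

theorem OM.isOVIHom_vecMulLinear {n m : ℕ} (φ : OMHom R n m) :
    IsOVIHom (Matrix.vecMulLinear φ.A) := by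
  refine ⟨φ.f, fun i => ⟨?_, fun r hr => ?_⟩⟩
  · have : Pi.single i (1:R) ᵥ* φ.A = φ.A i := Matrix.single_one_vecMul i φ.A
    simp only [Matrix.vecMulLinear_apply, this]
    simp [φ.hpivot i i]
  · have : Pi.single i (1:R) ᵥ* φ.A = φ.A i := Matrix.single_one_vecMul i φ.A
    simp only [Matrix.vecMulLinear_apply, this]
    exact φ.hzero i r hr

/-- The forgetful functor from the rigidified category to `OVI R`. -/
def OM.toOVI (R : Type u) [Ring R] : OM R ⥤ OVI R where
  obj n := OVI.mk R (OM.len n)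
  map φ := ⟨Matrix.vecMulLinear φ.A, OM.isOVIHom_vecMulLinear φ⟩
  map_id n := Subtype.ext (LinearMap.ext fun v => by
    show v ᵥ* (𝟙 n : n ⟶ n).A = v
    rw [OM.id_A]; exact Matrix.vecMul_one _)
  map_comp φ ψ := Subtype.ext (LinearMap.ext fun v => by
    show v ᵥ* (φ ≫ ψ).A = (v ᵥ* φ.A) ᵥ* ψ.A
    rw [OM.comp_A]; exact (Matrix.vecMul_vecMul _ _ _).symm)

theorem OM.le_of_hom {n m : OM R} (φ : n ⟶ m) : OM.len n ≤ OM.len m := by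
  simpa using Fintype.card_le_of_embedding φ.f.toEmbedding

end OMFunctor

section OMKeys

open CategoryTheory

variable {R : Type u} [Ring R] [Finite R]

instance {n m : OM R} : Finite (n ⟶ m) := by
  refine Finite.of_injective
    (fun φ : OMHom R (OM.len n) (OM.len m) => (⇑φ.f, φ.A)) ?_
  rintro φ ψ h
  rw [Prod.mk.injEq] at h
  exact OMHom.ext (DFunLike.coe_injective h.1) h.2

set_option linter.unusedSectionVars false

theorem posVal_lt_iff_of_top {W m : ℕ} {d d' : ℕ → ℕ} {j0 : ℕ} (hj0 : j0 < m)
    (hne : d j0 ≠ d' j0) (hagree : ∀ j, j0 < j → j < m → d j = d' j)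
    (hd : ∀ j < m, d j < W) (hd' : ∀ j < m, d' j < W) :
    posVal d m W < posVal d' m W ↔ d j0 < d' j0 := by
  constructor
  · intro hlt
    rcases Nat.lt_trichotomy (d j0) (d' j0) with h | h | h
    · exact h
    · exact absurd h hne
    · exact absurd hlt (not_lt.2 (le_of_lt
        (pos_sum_lt_of_top hj0 h (fun j h1 h2 => (hagree j h1 h2).symm) hd')))
  · intro h
    exact pos_sum_lt_of_top hj0 h hagree hd

namespace OM

variable (R) in
/-- A fixed enumeration of the finite ring `R`. -/
noncomputable def encR : R → ℕ := fun a => ((Finite.equivFin R) a : ℕ)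

theorem encR_lt (a : R) : encR R a < Nat.card R := ((Finite.equivFin R) a).is_lt

theorem encR_injective : Function.Injective (encR R) := fun a b h =>
  (Finite.equivFin R).injective (Fin.ext h)

variable {n m : ℕ}

/-- The digit string (over `ℕ`) of the `j`-th column of the matrix of a morphism. -/
noncomputable def colFun (φ : OMHom R n m) (j : Fin m) : ℕ → ℕ := fun i =>
  if h : i < n then encR R (φ.A ⟨i, h⟩ j) else 0

/-- The numerical encoding of the `j`-th column. -/
noncomputable def colDigit (φ : OMHom R n m) (j : Fin m) : ℕ :=
  posVal (colFun φ j) n (Nat.card R)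

theorem colFun_lt (φ : OMHom R n m) (j : Fin m) : ∀ i < n, colFun φ j i < Nat.card R := by
  intro i hi
  simp only [colFun, dif_pos hi]
  exact encR_lt _

theorem colDigit_lt (φ : OMHom R n m) (j : Fin m) : colDigit φ j < (Nat.card R) ^ n :=
  pos_sum_lt (colFun_lt φ j)

theorem colDigit_congr {m' : ℕ} {φ : OMHom R n m} {ψ : OMHom R n m'} {j : Fin m}
    {j' : Fin m'} (h : ∀ i, φ.A i j = ψ.A i j') : colDigit φ j = colDigit ψ j' := by
  unfold colDigit posVal
  refine Finset.sum_congr rfl fun i _ => ?_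
  unfold colFun
  split
  · rw [h]
  · rfl

theorem col_eq_of_colDigit_eq {m' : ℕ} {φ : OMHom R n m} {ψ : OMHom R n m'} {j : Fin m}
    {j' : Fin m'} (h : colDigit φ j = colDigit ψ j') : ∀ i, φ.A i j = ψ.A i j' := by
  intro i
  have := pos_digits_eq (colFun_lt φ j) (colFun_lt ψ j') h i i.is_lt
  simp only [colFun, dif_pos i.is_lt] at this
  exact encR_injective (by simpa using this)

/-- The digit string of the matrix of a morphism (one digit per column). -/
noncomputable def matFun (φ : OMHom R n m) : ℕ → ℕ := fun j =>
  if h : j < m then colDigit φ ⟨j, h⟩ else 0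

theorem matFun_lt (φ : OMHom R n m) : ∀ j < m, matFun φ j < (Nat.card R) ^ n := by
  intro j hj
  simp only [matFun, dif_pos hj]
  exact colDigit_lt _ _

/-- The numerical key of the matrix of a morphism. -/
noncomputable def matKey (φ : OMHom R n m) : ℕ :=
  posVal (matFun φ) m ((Nat.card R) ^ n)

/-- The digit string of the order-embedding of a morphism. -/
noncomputable def fFun (φ : OMHom R n m) : ℕ → ℕ := fun i =>
  if h : i < n then (φ.f ⟨i, h⟩ : ℕ) else 0

theorem fFun_lt (φ : OMHom R n m) : ∀ i < n, fFun φ i < m + 1 := by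
  intro i hi
  simp only [fFun, dif_pos hi]
  exact Nat.lt_succ_of_lt (φ.f _).is_lt

/-- The numerical key of the order-embedding of a morphism. -/
noncomputable def fKey (φ : OMHom R n m) : ℕ :=
  posVal (fFun φ) n (m + 1)

theorem A_eq_of_matKey_eq {φ ψ : OMHom R n m} (h : matKey φ = matKey ψ) : φ.A = ψ.A := by
  have h1 := pos_digits_eq (matFun_lt φ) (matFun_lt ψ) h
  ext i j
  have h2 := h1 j j.is_lt
  simp only [matFun, dif_pos j.is_lt] at h2
  exact col_eq_of_colDigit_eq (by simpa using h2) i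

theorem f_eq_of_fKey_eq {φ ψ : OMHom R n m} (h : fKey φ = fKey ψ) : φ.f = ψ.f := by
  have h1 := pos_digits_eq (fFun_lt φ) (fFun_lt ψ) h
  refine DFunLike.coe_injective (funext fun i => ?_)
  have h2 := h1 i i.is_lt
  simp only [fFun, dif_pos i.is_lt] at h2
  exact Fin.ext (by simpa using h2)

/-- The key of a morphism in the fiber over a fixed pair of objects. -/
noncomputable def fiberKey (φ : OMHom R n m) : ℕ ×ₗ ℕ := toLex (matKey φ, fKey φ)

theorem fiberKey_injective : Function.Injective (fiberKey (R := R) (n := n) (m := m)) := by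
  intro φ ψ h
  have h1 : matKey φ = matKey ψ ∧ fKey φ = fKey ψ := Prod.mk.injEq .. ▸ congrArg ofLex h
  exact OMHom.ext (f_eq_of_fKey_eq h1.2) (A_eq_of_matKey_eq h1.1)

end OM

end OMKeys
section OMCompat

open CategoryTheory

variable {R : Type u} [Ring R] [Finite R]
set_option linter.unusedSectionVars false

theorem exists_top_diff {m : ℕ} {d d' : ℕ → ℕ} (hne : ∃ j, j < m ∧ d j ≠ d' j) :
    ∃ j0, j0 < m ∧ d j0 ≠ d' j0 ∧ ∀ j, j0 < j → j < m → d j = d' j := by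
  classical
  have hS : ((Finset.range m).filter fun j => d j ≠ d' j).Nonempty := by
    obtain ⟨j, h1, h2⟩ := hne
    exact ⟨j, Finset.mem_filter.2 ⟨Finset.mem_range.2 h1, h2⟩⟩
  refine ⟨((Finset.range m).filter fun j => d j ≠ d' j).max' hS, ?_, ?_, ?_⟩
  · have := Finset.max'_mem _ hS
    rw [Finset.mem_filter, Finset.mem_range] at this
    exact this.1
  · have := Finset.max'_mem _ hS
    rw [Finset.mem_filter] at this
    exact this.2
  · intro j hj1 hj2
    by_contra hne2
    exact absurd (Finset.le_max' _ j (Finset.mem_filter.2 ⟨Finset.mem_range.2 hj2, hne2⟩))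
      (not_le.2 hj1)

theorem posVal_ne_top_diff {m W : ℕ} {d d' : ℕ → ℕ} (h : posVal d m W ≠ posVal d' m W) :
    ∃ j0, j0 < m ∧ d j0 ≠ d' j0 ∧ ∀ j, j0 < j → j < m → d j = d' j := by
  refine exists_top_diff ?_
  by_contra hc
  push_neg at hc
  exact h (Finset.sum_congr rfl fun j hj => by rw [hc j (Finset.mem_range.mp hj)])

namespace OM

theorem matKey_congr {n m : ℕ} {φ ψ : OMHom R n m} (h : φ.A = ψ.A) :
    matKey φ = matKey ψ := by
  unfold matKey matFun colDigit colFun posVal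
  rw [h]

variable {n m p : OM R}

theorem comp_col_pivot (φ : n ⟶ m) (h : m ⟶ p) (i : Fin (OM.len n)) (j : Fin (OM.len m)) :
    (φ ≫ h).A i (h.f j) = φ.A i j := by
  rw [comp_A, Matrix.mul_apply]
  have : ∀ j', φ.A i j' * h.A j' (h.f j) = φ.A i j' * (if j = j' then 1 else 0) := by
    intro j'; rw [h.hpivot j' j]
  rw [Finset.sum_congr rfl fun j' _ => this j']
  rw [Finset.sum_eq_single j]
  · simp
  · intro j' _ hj'; simp [Ne.symm hj']
  · simp

theorem comp_col_high (φ ψ : n ⟶ m) (h : m ⟶ p) {j0 : Fin (OM.len m)}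
    (hagree : ∀ j, j0 < j → ∀ i, φ.A i j = ψ.A i j) {t : Fin (OM.len p)}
    (ht : h.f j0 < t) (i : Fin (OM.len n)) : (φ ≫ h).A i t = (ψ ≫ h).A i t := by
  rw [comp_A, comp_A, Matrix.mul_apply, Matrix.mul_apply]
  refine Finset.sum_congr rfl fun j _ => ?_
  rcases le_or_gt j j0 with hle | hlt
  · rw [h.hzero j t (lt_of_le_of_lt (h.f.monotone hle) ht), mul_zero, mul_zero]
  · rw [hagree j hlt i]

set_option maxHeartbeats 1600000 in
theorem matKey_comp_lt {φ ψ : n ⟶ m} (h : m ⟶ p) (hlt : matKey φ < matKey ψ) :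
    matKey (φ ≫ h) < matKey (ψ ≫ h) := by
  unfold matKey at hlt ⊢
  obtain ⟨j0, hj0m, hj0ne, hagree⟩ :=
    posVal_ne_top_diff (d := matFun φ) (d' := matFun ψ) (Nat.ne_of_lt hlt)
  have hstrict : matFun φ j0 < matFun ψ j0 :=
    (posVal_lt_iff_of_top hj0m hj0ne hagree (matFun_lt φ) (matFun_lt ψ)).mp hlt
  set jF : Fin (OM.len m) := ⟨j0, hj0m⟩ with hjF
  have hcoltop : ∀ j : Fin (OM.len m), jF < j → ∀ i, φ.A i j = ψ.A i j := by
    intro j hj i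
    have h1 : matFun φ (j : ℕ) = matFun ψ (j : ℕ) := hagree _ hj j.is_lt
    simp only [matFun, dif_pos j.is_lt] at h1
    exact col_eq_of_colDigit_eq (by simpa using h1) i
  -- composites
  refine pos_sum_lt_of_top (W := (Nat.card R) ^ (OM.len n)) (j0 := (h.f jF : ℕ))
    (h.f jF).is_lt ?_ ?_ (matFun_lt (φ ≫ h))
  · have e1 : colDigit (φ ≫ h) (h.f jF) = colDigit φ jF :=
      colDigit_congr fun i => comp_col_pivot φ h i jF
    have e2 : colDigit (ψ ≫ h) (h.f jF) = colDigit ψ jF :=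
      colDigit_congr fun i => comp_col_pivot ψ h i jF
    have hstrict' : colDigit φ jF < colDigit ψ jF := by
      simpa only [matFun, dif_pos hj0m] using hstrict
    simp only [matFun, dif_pos (h.f jF).is_lt, Fin.eta]
    omega
  · intro t h1 h2
    simp only [matFun, dif_pos h2]
    refine colDigit_congr fun i => ?_
    exact comp_col_high φ ψ h hcoltop (by exact h1) i

set_option maxHeartbeats 1600000 in
theorem fKey_comp_lt {φ ψ : n ⟶ m} (h : m ⟶ p) (hlt : fKey φ < fKey ψ) :
    fKey (φ ≫ h) < fKey (ψ ≫ h) := by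
  unfold fKey at hlt ⊢
  obtain ⟨i0, hi0m, hi0ne, hagree⟩ :=
    posVal_ne_top_diff (d := fFun φ) (d' := fFun ψ) (Nat.ne_of_lt hlt)
  have hstrict : fFun φ i0 < fFun ψ i0 :=
    (posVal_lt_iff_of_top hi0m hi0ne hagree (fFun_lt φ) (fFun_lt ψ)).mp hlt
  refine pos_sum_lt_of_top (W := OM.len p + 1) (j0 := i0) hi0m ?_ ?_ (fFun_lt (φ ≫ h))
  · simp only [fFun, dif_pos hi0m] at hstrict ⊢
    rw [comp_f, comp_f]
    exact h.f.strictMono (by exact hstrict)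
  · intro i h1 h2
    have h3 := hagree i h1 h2
    simp only [fFun, dif_pos h2] at h3 ⊢
    rw [comp_f, comp_f]
    simp only [RelEmbedding.coe_trans, Function.comp_apply]
    rw [show φ.f ⟨i, h2⟩ = ψ.f ⟨i, h2⟩ from Fin.ext h3]

theorem fiberKey_comp_lt {φ ψ : n ⟶ m} (h : m ⟶ p) (hlt : fiberKey φ < fiberKey ψ) :
    fiberKey (φ ≫ h) < fiberKey (ψ ≫ h) := by
  rw [fiberKey, fiberKey, Prod.Lex.lt_iff] at hlt ⊢
  rcases hlt with h1 | ⟨h1, h2⟩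
  · exact Or.inl (matKey_comp_lt h h1)
  · refine Or.inr ⟨?_, fKey_comp_lt h h2⟩
    exact matKey_congr (by rw [comp_A, comp_A, A_eq_of_matKey_eq h1])

theorem fiberKey_comp_le {φ ψ : n ⟶ m} (h : m ⟶ p) (hle : fiberKey φ ≤ fiberKey ψ) :
    fiberKey (φ ≫ h) ≤ fiberKey (ψ ≫ h) := by
  rcases eq_or_lt_of_le hle with heq | hlt
  · rw [fiberKey_injective heq]
  · exact le_of_lt (fiberKey_comp_lt h hlt)

end OM

end OMCompat
section OMWqo

open CategoryTheory

variable {R : Type u} [Ring R]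

namespace OM

/-- The index of the pivot row `j`, if it is one. -/
noncomputable def pivotIdx {n m : ℕ} (f : Fin n ↪o Fin m) (j : Fin m) : Option (Fin n) :=
  if h : ∃ i, f i = j then some h.choose else none

theorem pivotIdx_eq_some_iff {n m : ℕ} {f : Fin n ↪o Fin m} {j : Fin m} {i : Fin n} :
    pivotIdx f j = some i ↔ f i = j := by
  constructor
  · intro h
    unfold pivotIdx at h
    split at h
    · next hex =>
      obtain rfl : hex.choose = i := by simpa using h
      exact hex.choose_spec
    · simp at h
  · intro h
    have hex : ∃ i, f i = j := ⟨i, h⟩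
    have : hex.choose = i := f.injective (hex.choose_spec.trans h.symm)
    unfold pivotIdx
    rw [dif_pos hex, this]

theorem pivotIdx_eq_none_iff {n m : ℕ} {f : Fin n ↪o Fin m} {j : Fin m} :
    pivotIdx f j = none ↔ ∀ i, f i ≠ j := by
  unfold pivotIdx
  split
  · next hex => simpa using ⟨hex.choose, hex.choose_spec⟩
  · next hex => push_neg at hex; simpa using hex

/-- The word over a finite alphabet encoding a morphism. -/
noncomputable def word {n m : ℕ} (φ : OMHom R n m) : List (Option (Fin n) × (Fin n → R)) :=
  List.ofFn fun j : Fin m => (pivotIdx φ.f j, fun i => φ.A i j)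

theorem ofFn_sublist {α : Type*} {m m' : ℕ} {F : Fin m → α} {G : Fin m' → α}
    (h : List.Sublist (List.ofFn F) (List.ofFn G)) : ∃ g : Fin m ↪o Fin m', ∀ j, G (g j) = F j := by
  obtain ⟨g0, hg0⟩ := List.sublist_iff_exists_fin_orderEmbedding_get_eq.mp h
  have hm : (List.ofFn F).length = m := List.length_ofFn (f := F)
  have hm' : (List.ofFn G).length = m' := List.length_ofFn (f := G)
  refine ⟨((Fin.castOrderIso hm.symm).toOrderEmbedding.trans g0).trans
    (Fin.castOrderIso hm').toOrderEmbedding, fun j => ?_⟩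
  have h1 := hg0 ((Fin.castOrderIso hm.symm).toOrderEmbedding j)
  rw [List.get_ofFn, List.get_ofFn] at h1
  have e1 : F (Fin.cast (by simp) ((Fin.castOrderIso hm.symm).toOrderEmbedding j)) = F j :=
    congrArg F (Fin.ext (by simp))
  have e2 : G (Fin.cast (by simp) (g0 ((Fin.castOrderIso hm.symm).toOrderEmbedding j)))
      = G ((((Fin.castOrderIso hm.symm).toOrderEmbedding.trans g0).trans
        (Fin.castOrderIso hm').toOrderEmbedding) j) := congrArg G (Fin.ext (by simp))
  rw [← e2, ← h1, e1]

/-- The key well-quasi-order property of morphisms out of a fixed object. -/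
theorem wqo [Finite R] (x : OM R) (s : ℕ → Σ i : ℕ, (x ⟶ OM.mk R i)) :
    ∃ a b : ℕ, a < b ∧ ∃ h : OM.mk R (s a).1 ⟶ OM.mk R (s b).1,
      (s b).2 = (s a).2 ≫ h := by
  classical
  set β := Option (Fin (OM.len x)) × (Fin (OM.len x) → R) with hβ
  haveI : IsRefl β (· = ·) := ⟨fun _ => rfl⟩
  haveI : IsTrans β (· = ·) := ⟨fun _ _ _ h1 h2 => h1.trans h2⟩
  have hpwo : (Set.univ : Set β).PartiallyWellOrderedOn (· = ·) := by
    intro f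
    obtain ⟨a, b, hab, heq⟩ := Finite.exists_ne_map_eq_of_infinite f
    rcases lt_or_gt_of_ne hab with h | h
    · exact ⟨a, b, h, congrArg Subtype.val heq⟩
    · exact ⟨b, a, h, congrArg Subtype.val heq.symm⟩
  have hwords := (hpwo.partiallyWellOrderedOn_sublistForall₂ (r := (· = ·)))
    (fun k => ⟨word ((s k).2), fun l _ => Set.mem_univ l⟩)
  obtain ⟨a, b, hab, hsub⟩ := hwords
  have hsub : List.SublistForall₂ (· = ·) (word (s a).2) (word (s b).2) := hsub
  rw [List.sublistForall₂_iff] at hsub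
  obtain ⟨l', hl', hsubl⟩ := hsub
  rw [List.forall₂_eq_eq_eq] at hl'
  subst hl'
  obtain ⟨g, hg⟩ := ofFn_sublist hsubl
  -- unpack the letter equalities
  have hpiv : ∀ j : Fin (s a).1, pivotIdx (s b).2.f (g j) = pivotIdx (s a).2.f j :=
    fun j => congrArg Prod.fst (hg j)
  have hcol : ∀ (j : Fin (s a).1) (i : Fin (OM.len x)),
      (s b).2.A i (g j) = (s a).2.A i j := by
    intro j i
    have := congrArg Prod.snd (hg j)
    exact congrFun this i
  have hfb : ∀ i, (s b).2.f i = g ((s a).2.f i) := by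
    intro i
    have h1 : pivotIdx (s a).2.f ((s a).2.f i) = some i := pivotIdx_eq_some_iff.mpr rfl
    have h2 : pivotIdx (s b).2.f (g ((s a).2.f i)) = some i := by
      rw [hpiv ((s a).2.f i), h1]
    exact pivotIdx_eq_some_iff.mp h2
  -- build the dividing morphism
  refine ⟨a, b, hab, ?_⟩
  set A' : Matrix (Fin (OM.len x)) (Fin (s b).1) R := (s b).2.A with hA'
  let B : Matrix (Fin (s a).1) (Fin (s b).1) R := fun j t =>
    match pivotIdx g t with
    | some j' => if j' = j then 1 else 0
    | none =>
      match pivotIdx (s a).2.f j with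
      | some i => A' i t
      | none => 0
  have hBpiv : ∀ j j', B j (g j') = if j' = j then 1 else 0 := by
    intro j j'
    show ((match pivotIdx g (g j') with
      | some j'' => if j'' = j then 1 else 0
      | none => match pivotIdx (s a).2.f j with
        | some i => A' i (g j')
        | none => 0 : R)) = if j' = j then 1 else 0
    rw [pivotIdx_eq_some_iff.mpr rfl]
  have hBzero : ∀ j t, g j < t → B j t = 0 := by
    intro j t ht
    show ((match pivotIdx g t with
      | some j'' => if j'' = j then 1 else 0
      | none => match pivotIdx (s a).2.f j with
        | some i => A' i t
        | none => 0 : R)) = 0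
    cases heq : pivotIdx g t with
    | some j'' =>
      have : g j'' = t := pivotIdx_eq_some_iff.mp heq
      have hjj : j < j'' := g.strictMono.lt_iff_lt.mp (by rw [this]; exact ht)
      exact if_neg (ne_of_gt hjj)
    | none =>
      cases heq2 : pivotIdx (s a).2.f j with
      | some i =>
        show A' i t = 0
        have : (s a).2.f i = j := pivotIdx_eq_some_iff.mp heq2
        refine (s b).2.hzero i t ?_
        rw [hfb i, this]
        exact ht
      | none => rfl
  refine ⟨⟨g, B, hBpiv, hBzero⟩, ?_⟩
  refine hom_ext ?_ ?_
  · exact DFunLike.coe_injective (funext fun i => (hfb i).trans rfl)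
  · show A' = (s a).2.A * B
    ext i t
    rw [Matrix.mul_apply]
    cases heq : pivotIdx g t with
    | some j =>
      obtain rfl : g j = t := pivotIdx_eq_some_iff.mp heq
      rw [Finset.sum_congr rfl fun j' _ => by rw [hBpiv j' j]]
      rw [Finset.sum_eq_single j]
      · rw [if_pos rfl, mul_one, hcol]
      · intro j' _ hj'; rw [if_neg (Ne.symm hj'), mul_zero]
      · simp
    | none =>
      have hvanish : ∀ j' ∈ Finset.univ, j' ∉ Finset.univ.image (s a).2.f →
          (s a).2.A i j' * B j' t = 0 := by
        intro j' _ hj'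
        have : pivotIdx (s a).2.f j' = none := by
          rw [pivotIdx_eq_none_iff]
          intro i' hcon
          exact hj' (Finset.mem_image.2 ⟨i', Finset.mem_univ _, hcon⟩)
        show (s a).2.A i j' * ((match pivotIdx g t with
          | some j'' => if j'' = j' then 1 else 0
          | none => match pivotIdx (s a).2.f j' with
            | some i => A' i t
            | none => 0 : R)) = 0
        rw [heq, this, mul_zero]
      rw [← Finset.sum_subset (Finset.subset_univ (Finset.univ.image (s a).2.f)) hvanish]
      rw [Finset.sum_image (fun i1 _ i2 _ h => (s a).2.f.injective h)]
      have hterm : ∀ i', (s a).2.A i ((s a).2.f i') * B ((s a).2.f i') t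
          = (if i' = i then 1 else 0) * A' i' t := by
        intro i'
        rw [(s a).2.hpivot i i']
        congr 1
        show ((match pivotIdx g t with
          | some j'' => if j'' = (s a).2.f i' then 1 else 0
          | none => match pivotIdx (s a).2.f ((s a).2.f i') with
            | some i => A' i t
            | none => 0 : R)) = A' i' t
        rw [heq, pivotIdx_eq_some_iff.mpr rfl]
      rw [Finset.sum_congr rfl fun i' _ => hterm i']
      rw [Finset.sum_eq_single i]
      · rw [if_pos rfl, one_mul]
      · intro i' _ hi'; rw [if_neg hi', zero_mul]
      · simp

end OM

end OMWqo
section OMGrobner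

open CategoryTheory

variable {R : Type u} [Ring R] [Finite R]
set_option linter.unusedSectionVars false

namespace OM

variable (R) in
/-- The global key of a morphism out of `x`. -/
noncomputable def GKey (x : OM R) (p : Σ i : ℕ, (x ⟶ OM.mk R i)) : Lex (ℕ × (ℕ ×ₗ ℕ)) :=
  toLex (p.1, fiberKey p.2)

theorem GKey_injective {x : OM R} {p q : Σ i : ℕ, (x ⟶ OM.mk R i)}
    (h : GKey R x p = GKey R x q) : p = q := by
  obtain ⟨i, φ⟩ := p
  obtain ⟨j, ψ⟩ := q
  have h1 : (i, fiberKey φ) = (j, fiberKey ψ) := toLex.injective h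
  obtain ⟨h2, h3⟩ := Prod.mk.injEq .. ▸ h1
  subst h2
  exact congrArg (Sigma.mk i) (fiberKey_injective h3)

theorem om_isGrobner : IsGrobner (OM R) := by
  refine ⟨ℕ, fun i => OM.mk R i, ?_, ?_⟩
  · intro c
    refine ⟨OM.len c, ⟨Iso.refl _⟩, ?_⟩
    rintro j ⟨iso⟩
    exact le_antisymm (OM.le_of_hom iso.hom) (OM.le_of_hom iso.inv)
  · intro x
    constructor
    · exact wqo x
    · refine ⟨fun p q => GKey R x p ≤ GKey R x q, ?_, ?_, ?_⟩
      · exact { refl := fun a => le_refl _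
                trans := fun a b c h1 h2 => le_trans h1 h2
                antisymm := fun a b h1 h2 => GKey_injective (le_antisymm h1 h2)
                total := fun a b => le_total _ _ }
      · intro i j f g h hle
        show GKey R x ⟨j, f ≫ h⟩ ≤ GKey R x ⟨j, g ≫ h⟩
        have hle' : toLex (i, fiberKey f) ≤ toLex (i, fiberKey g) := hle
        rw [Prod.Lex.le_iff] at hle'
        rcases hle' with h1 | ⟨_, h2⟩
        · exact absurd h1 (lt_irrefl i)
        · unfold GKey
          rw [Prod.Lex.le_iff]
          exact Or.inr ⟨rfl, fiberKey_comp_le h h2⟩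
      · intro i
        have htrans : IsTrans (x ⟶ OM.mk R i)
            (fun f g => GKey R x ⟨i, f⟩ ≤ GKey R x ⟨i, g⟩ ∧ f ≠ g) := by
          constructor
          rintro a b c ⟨le1, ne1⟩ ⟨le2, ne2⟩
          refine ⟨le_trans le1 le2, fun hac => ?_⟩
          subst hac
          have : (⟨i, a⟩ : Σ i : ℕ, (x ⟶ OM.mk R i)) = ⟨i, b⟩ :=
            GKey_injective (le_antisymm le1 le2)
          exact ne1 (eq_of_heq (Sigma.mk.inj_iff.mp this).2)
        have hirrefl : IsIrrefl (x ⟶ OM.mk R i)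
            (fun f g => GKey R x ⟨i, f⟩ ≤ GKey R x ⟨i, g⟩ ∧ f ≠ g) :=
          ⟨fun a h => h.2 rfl⟩
        exact @Finite.wellFounded_of_trans_of_irrefl _ _ _ htrans hirrefl

end OM

end OMGrobner

section OMPropertyF

open CategoryTheory Matrix

variable {R : Type u} [Ring R]
set_option linter.unusedSectionVars false

instance {n m : OVI R} [Finite R] : Finite (n ⟶ m) := by
  refine Finite.of_injective
    (fun φ : { φ : (Fin (OVI.len n) → R) →ₗ[R] (Fin (OVI.len m) → R) // IsOVIHom φ } =>
      (φ.1 : (Fin (OVI.len n) → R) → (Fin (OVI.len m) → R))) ?_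
  intro φ ψ h
  exact Subtype.ext (DFunLike.coe_injective h)

theorem OM.essSurj : (OM.toOVI R).EssSurj :=
  ⟨fun y => ⟨OM.mk R (OVI.len y), ⟨Iso.refl y⟩⟩⟩

theorem OM.propertyF [Finite R] : PropertyF (OM.toOVI R) := by
  classical
  intro y
  set n := OVI.len y with hn
  have e := Finite.equivFin (y ⟶ y)
  refine ⟨Nat.card (y ⟶ y), fun _ => OM.mk R n, fun i => e.symm i, ?_⟩
  intro z f
  set m := OM.len z with hm
  have hex : IsOVIHom f.1 := f.2
  set fE : Fin n ↪o Fin m := hex.choose with hfE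
  have hspec := hex.choose_spec
  set A : Matrix (Fin n) (Fin m) R := Matrix.of fun i s => f.1 (Pi.single i 1) s with hA
  set U : Matrix (Fin n) (Fin n) R := Matrix.of fun i i' => A i (fE i') with hU
  have hUdiag : ∀ i, U i i = 1 := fun i => (hspec i).1
  have hUabove : ∀ i i', i < i' → U i i' = 0 := fun i i' h =>
    (hspec i).2 _ (fE.strictMono h)
  set X : Matrix (Fin n) (Fin n) R := 1 - U with hX
  have hXlow : ∀ i j : Fin n, i ≤ j → X i j = 0 := by
    intro i j hij
    rcases eq_or_lt_of_le hij with rfl | h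
    · show (1 : Matrix (Fin n) (Fin n) R) i i - U i i = 0
      rw [Matrix.one_apply_eq, hUdiag]
      exact sub_self 1
    · show (1 : Matrix (Fin n) (Fin n) R) i j - U i j = 0
      rw [Matrix.one_apply_ne (ne_of_lt h), hUabove i j h]
      exact sub_zero 0
  have hXpow : ∀ (k : ℕ) (i j : Fin n), (i : ℕ) < (j : ℕ) + k → (X ^ k) i j = 0 := by
    intro k
    induction k with
    | zero =>
      intro i j h
      rw [pow_zero]
      exact Matrix.one_apply_ne (fun hc => by rw [hc] at h; omega)
    | succ k ih =>
      intro i j h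
      rw [pow_succ, Matrix.mul_apply]
      refine Finset.sum_eq_zero fun l _ => ?_
      rcases Nat.lt_or_ge (i : ℕ) ((l : ℕ) + k) with h1 | h1
      · rw [ih i l h1, zero_mul]
      · have hlj : l ≤ j := by
          rw [Fin.le_def]; omega
        rw [hXlow l j hlj, mul_zero]
  set Wm : Matrix (Fin n) (Fin n) R := ∑ k ∈ Finset.range n, X ^ k with hWm
  have hXn : X ^ n = 0 := by
    ext i j
    rw [Matrix.zero_apply]
    exact hXpow n i j (by omega)
  have hXm1 : X - 1 = -U := by rw [hX, sub_sub_cancel_left]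
  have hWU : Wm * U = 1 := by
    have h1 := geom_sum_mul X n
    rw [hXn, hXm1, zero_sub, Matrix.mul_neg] at h1
    exact neg_injective h1
  have hUW : U * Wm = 1 := by
    have h1 := mul_geom_sum X n
    rw [hXn, hXm1, zero_sub, Matrix.neg_mul] at h1
    exact neg_injective h1
  have hWlow : ∀ i j : Fin n, i < j → Wm i j = 0 := by
    intro i j hij
    rw [hWm, Matrix.sum_apply]
    refine Finset.sum_eq_zero fun k _ => ?_
    refine hXpow k i j ?_
    have : (i : ℕ) < (j : ℕ) := hij
    omega
  set A' : Matrix (Fin n) (Fin m) R := Wm * A with hA'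
  have hA'piv : ∀ i i', A' i (fE i') = if i' = i then 1 else 0 := by
    intro i i'
    have h1 : A' i (fE i') = (Wm * U) i i' := by
      rw [hA', Matrix.mul_apply, Matrix.mul_apply]
      rfl
    rw [h1, hWU, Matrix.one_apply]
    simp [eq_comm]
  have hA'zero : ∀ i s, fE i < s → A' i s = 0 := by
    intro i s hs
    rw [hA', Matrix.mul_apply]
    refine Finset.sum_eq_zero fun j _ => ?_
    rcases le_or_gt j i with h1 | h1
    · have : A j s = 0 := (hspec j).2 s (lt_of_le_of_lt (fE.monotone h1) hs)
      rw [this, mul_zero]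
    · rw [hWlow i j h1, zero_mul]
  set g : OM.mk R n ⟶ z := ⟨fE, A', hA'piv, hA'zero⟩ with hg
  have htOVI : IsOVIHom (Matrix.vecMulLinear U) := by
    refine ⟨RelEmbedding.refl _, fun i => ⟨?_, fun r hr => ?_⟩⟩
    · show (Pi.single i 1 ᵥ* U) i = 1
      rw [Matrix.single_one_vecMul]
      exact hUdiag i
    · show (Pi.single i 1 ᵥ* U) r = 0
      rw [Matrix.single_one_vecMul]
      exact hUabove i r hr
  set t0 : y ⟶ y := ⟨Matrix.vecMulLinear U, htOVI⟩ with ht0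
  refine ⟨e t0, g, ?_⟩
  have hUA' : U * A' = A := by
    rw [hA', ← Matrix.mul_assoc, hUW, Matrix.one_mul]
  have het : e.symm (e t0) = t0 := e.symm_apply_apply t0
  apply Subtype.ext
  apply LinearMap.ext
  intro v
  show f.1 v = ((OM.toOVI R).map g).1 ((e.symm (e t0)).1 v)
  rw [het]
  show f.1 v = (v ᵥ* U) ᵥ* A'
  rw [Matrix.vecMul_vecMul, hUA']
  funext s
  rw [linearMap_apply_eq_sum f.1 v s]
  rfl

theorem OVI.isQuasiGrobner (R : Type u) [Ring R] [Finite R] : IsQuasiGrobner (OVI R) :=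
  ⟨Cat.of (OM R), OM.toOVI R, OM.om_isGrobner, OM.essSurj, OM.propertyF⟩

end OMPropertyF
section ModuleCore

open CategoryTheory

namespace OMCore

variable {R : Type u} [Ring R] [Finite R]
variable {k : Type u} [CommRing k]
variable {r : ℕ} (x : Fin r → OM R)
set_option linter.unusedSectionVars false

/-- The index of generators over `z`. -/
abbrev S (z : OM R) := Σ i : Fin r, (x i ⟶ z)

/-- The key used to linearly order `S x z`. -/
noncomputable def SK {z : OM R} (σ : S x z) : Lex (ℕ × (ℕ ×ₗ ℕ)) :=
  toLex ((σ.1 : ℕ), OM.fiberKey σ.2)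

theorem SK_injective {z : OM R} : Function.Injective (SK x (z := z)) := by
  rintro ⟨i, φ⟩ ⟨j, ψ⟩ h
  have h1 : ((i : ℕ), OM.fiberKey φ) = ((j : ℕ), OM.fiberKey ψ) := toLex.injective h
  obtain ⟨h2, h3⟩ := Prod.mk.injEq .. ▸ h1
  obtain rfl : i = j := Fin.ext h2
  exact congrArg (Sigma.mk i) (OM.fiberKey_injective h3)

/-- Push a generator index forward along a morphism. -/
def shiftS {z z' : OM R} (h : z ⟶ z') (σ : S x z) : S x z' := ⟨σ.1, σ.2 ≫ h⟩

theorem SK_shift_lt {z z' : OM R} (h : z ⟶ z') {σ τ : S x z} (hlt : SK x σ < SK x τ) :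
    SK x (shiftS x h σ) < SK x (shiftS x h τ) := by
  obtain ⟨i, φ⟩ := σ
  obtain ⟨j, ψ⟩ := τ
  unfold SK at hlt ⊢
  unfold shiftS
  rw [Prod.Lex.lt_iff] at hlt ⊢
  dsimp only at hlt ⊢
  rcases hlt with h1 | ⟨h1, h2⟩
  · exact Or.inl h1
  · obtain rfl : i = j := Fin.ext h1
    exact Or.inr ⟨rfl, OM.fiberKey_comp_lt h h2⟩

theorem SK_shift_le {z z' : OM R} (h : z ⟶ z') {σ τ : S x z} (hle : SK x σ ≤ SK x τ) :
    SK x (shiftS x h σ) ≤ SK x (shiftS x h τ) := by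
  rcases eq_or_lt_of_le hle with heq | hlt
  · rw [SK_injective x heq]
  · exact le_of_lt (SK_shift_lt x h hlt)

theorem shiftS_injective {z z' : OM R} (h : z ⟶ z') :
    Function.Injective (shiftS x h) := by
  intro σ τ hst
  by_contra hne
  rcases lt_or_gt_of_ne (fun hk => hne (SK_injective x hk) :
      SK x σ ≠ SK x τ) with h1 | h1
  · exact absurd (congrArg (SK x) hst) (ne_of_lt (SK_shift_lt x h h1))
  · exact absurd (congrArg (SK x) hst) (ne_of_gt (SK_shift_lt x h h1))

/-- The linear order on `S x z`. -/
noncomputable def Sord (z : OM R) : LinearOrder (S x z) :=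
  LinearOrder.lift' (SK x) (SK_injective x)

variable (k) in
/-- The shift operator on free modules. -/
noncomputable def Sh {z z' : OM R} (h : z ⟶ z') : (S x z →₀ k) →ₗ[k] (S x z' →₀ k) :=
  Finsupp.lmapDomain k k (shiftS x h)

theorem Sh_id (z : OM R) (w : S x z →₀ k) : Sh k x (𝟙 z) w = w := by
  have : shiftS x (𝟙 z) = id := funext fun σ => by
    unfold shiftS
    rw [Category.comp_id]
    rfl
  unfold Sh
  rw [Finsupp.lmapDomain_apply, this, Finsupp.mapDomain_id]

theorem Sh_comp {z z' z'' : OM R} (h : z ⟶ z') (h' : z' ⟶ z'') (w : S x z →₀ k) :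
    Sh k x h' (Sh k x h w) = Sh k x (h ≫ h') w := by
  have : shiftS x (h ≫ h') = shiftS x h' ∘ shiftS x h := funext fun σ => by
    show (⟨σ.1, σ.2 ≫ (h ≫ h')⟩ : S x z'') = ⟨σ.1, (σ.2 ≫ h) ≫ h'⟩
    rw [Category.assoc]
  unfold Sh
  rw [Finsupp.lmapDomain_apply, Finsupp.lmapDomain_apply, Finsupp.lmapDomain_apply, this,
    Finsupp.mapDomain_comp]

variable (M : OM R ⥤ ModuleCat.{u} k) (mg : ∀ i, M.obj (x i))

/-- The projection from the free module onto `M`. -/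
noncomputable def piM (z : OM R) : (S x z →₀ k) →ₗ[k] M.obj z :=
  Finsupp.linearCombination k (fun σ => M.map σ.2 (mg σ.1))

theorem piM_shift {z z' : OM R} (h : z ⟶ z') (w : S x z →₀ k) :
    piM x M mg z' (Sh k x h w) = M.map h (piM x M mg z w) := by
  induction w using Finsupp.induction_linear with
  | zero => simp [Sh, piM]
  | add f g hf hg =>
    simp only [map_add, hf, hg]
  | single σ b =>
    unfold Sh piM
    rw [Finsupp.lmapDomain_apply, Finsupp.mapDomain_single, Finsupp.linearCombination_single,
      Finsupp.linearCombination_single, map_smul]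
    show b • (M.map ((shiftS x h σ).2) (mg σ.1)) = b • (M.map h (M.map σ.2 (mg σ.1)))
    have : M.map (σ.2 ≫ h) = M.map σ.2 ≫ M.map h := M.map_comp σ.2 h
    unfold shiftS
    rw [this]
    rfl

end OMCore

end ModuleCore
section ModuleCore2

open CategoryTheory

namespace OMCore

variable {R : Type u} [Ring R] [Finite R]
variable {k : Type u} [CommRing k]
variable {r : ℕ} (x : Fin r → OM R)
set_option linter.unusedSectionVars false

/-- A family of submodules of the free modules closed under the shift operators. -/
def ClosedFam (P : ∀ z : OM R, Submodule k (S x z →₀ k)) : Prop :=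
  ∀ (z z' : OM R) (h : z ⟶ z') (w : S x z →₀ k), w ∈ P z → Sh k x h w ∈ P z'

/-- The ideal of top coefficients at position `lam` of a family. -/
noncomputable def JF (P : ∀ z : OM R, Submodule k (S x z →₀ k)) (lam : Σ z : OM R, S x z) :
    Ideal k :=
  Submodule.map (Finsupp.lapply lam.2)
    ((P lam.1) ⊓ Finsupp.supported k k {τ | SK x τ ≤ SK x lam.2})

/-- The divisibility quasi-order on pairs of an object and a generator index. -/
def lamLE (p q : Σ z : OM R, S x z) : Prop :=
  ∃ (hi : q.2.1 = p.2.1) (h : p.1 ⟶ q.1),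
    q.2.2 = eqToHom (congrArg x hi) ≫ p.2.2 ≫ h

theorem lamLE_refl (p : Σ z : OM R, S x z) : lamLE x p p :=
  ⟨rfl, 𝟙 p.1, by simp⟩

theorem lamLE_trans {p q s : Σ z : OM R, S x z} (h1 : lamLE x p q) (h2 : lamLE x q s) :
    lamLE x p s := by
  obtain ⟨zp, ip, φp⟩ := p
  obtain ⟨zq, iq, φq⟩ := q
  obtain ⟨zs, is, φs⟩ := s
  obtain ⟨hi1, h1, he1⟩ := h1
  obtain ⟨hi2, h2, he2⟩ := h2
  dsimp at hi1 hi2 he1 he2 ⊢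
  subst hi1
  subst hi2
  refine ⟨rfl, h1 ≫ h2, ?_⟩
  simp only [eqToHom_refl, Category.id_comp] at he1 he2 ⊢
  rw [he2, he1, Category.assoc]

theorem lamLE_shift {p q : Σ z : OM R, S x z} (hpq : lamLE x p q) :
    ∃ h : p.1 ⟶ q.1, q.2 = shiftS x h p.2 := by
  obtain ⟨zp, ip, φp⟩ := p
  obtain ⟨zq, iq, φq⟩ := q
  obtain ⟨hi, h, he⟩ := hpq
  dsimp at hi he ⊢
  subst hi
  refine ⟨h, ?_⟩
  simp only [eqToHom_refl, Category.id_comp] at he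
  rw [he]
  rfl

theorem JF_mono_fam {P Q : ∀ z : OM R, Submodule k (S x z →₀ k)} (hPQ : ∀ z, P z ≤ Q z)
    (lam : Σ z : OM R, S x z) : JF x P lam ≤ JF x Q lam :=
  Submodule.map_mono (inf_le_inf_right _ (hPQ _))

theorem JF_mono_lam {P : ∀ z : OM R, Submodule k (S x z →₀ k)} (hP : ClosedFam x P)
    {p q : Σ z : OM R, S x z} (hpq : lamLE x p q) : JF x P p ≤ JF x P q := by
  classical
  obtain ⟨h, hq2⟩ := lamLE_shift x hpq
  rintro c ⟨w, ⟨hw1, hw2⟩, rfl⟩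
  simp only [SetLike.mem_coe] at hw1 hw2
  refine ⟨Sh k x h w, ⟨hP _ _ h w hw1, ?_⟩, ?_⟩
  · simp only [SetLike.mem_coe, Finsupp.mem_supported]
    rw [Finsupp.mem_supported] at hw2
    intro τ' hτ'
    have hτ'' : τ' ∈ (w.support).image (shiftS x h) := by
      refine Finset.mem_of_subset ?_ hτ'
      exact Finsupp.mapDomain_support
    obtain ⟨τ, hτ, rfl⟩ := Finset.mem_image.mp hτ''
    have h1 : SK x τ ≤ SK x p.2 := hw2 hτ
    show SK x (shiftS x h τ) ≤ SK x q.2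
    rw [hq2]
    exact SK_shift_le x h h1
  · show (Sh k x h w) q.2 = w p.2
    rw [hq2]
    exact Finsupp.mapDomain_apply (shiftS_injective x h) w p.2

theorem fam_eq_of_JF_eq {P Q : ∀ z : OM R, Submodule k (S x z →₀ k)}
    (hPQ : ∀ z, P z ≤ Q z) (hJ : ∀ lam, JF x Q lam ≤ JF x P lam) (z : OM R) :
    Q z ≤ P z := by
  classical
  letI := Sord x z
  letI : Fintype (S x z) := Fintype.ofFinite _
  have main : ∀ d : ℕ, ∀ w, w ∈ Q z →
      (∀ τ ∈ w.support, (Finset.univ.filter (fun τ' : S x z => τ' ≤ τ)).card < d) →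
      w ∈ P z := by
    intro d
    induction d using Nat.strong_induction_on with
    | _ d ih =>
      intro w hwQ hwsupp
      rcases eq_or_ne w 0 with rfl | hw0
      · exact (P z).zero_mem
      · have hsupp : w.support.Nonempty := Finsupp.support_nonempty_iff.mpr hw0
        set σ := w.support.max' hsupp with hσ
        have hσmem : σ ∈ w.support := Finset.max'_mem _ _
        have hcval : w σ ∈ JF x Q ⟨z, σ⟩ := by
          refine ⟨w, ⟨hwQ, ?_⟩, rfl⟩
          simp only [SetLike.mem_coe, Finsupp.mem_supported]
          intro τ hτ
          show SK x τ ≤ SK x σ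
          exact Finset.le_max' _ τ hτ
        have hcval' := hJ ⟨z, σ⟩ hcval
        obtain ⟨w', ⟨hw'P, hw'supp⟩, hw'val⟩ := hcval'
        simp only [SetLike.mem_coe] at hw'P hw'supp
        have hval2 : w' σ = w σ := hw'val
        have hvQ : w - w' ∈ Q z := sub_mem hwQ (hPQ z hw'P)
        have hsub : ∀ τ ∈ (w - w').support, τ < σ := by
          intro τ hτ
          have hne : (w - w') τ ≠ 0 := Finsupp.mem_support_iff.mp hτ
          have hτσ : τ ≤ σ := by
            have hmem := Finsupp.support_sub hτ
            rcases Finset.mem_union.mp hmem with h1 | h1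
            · exact Finset.le_max' _ τ h1
            · rw [Finsupp.mem_supported] at hw'supp
              exact hw'supp h1
          rcases eq_or_lt_of_le hτσ with rfl | hlt
          · exfalso
            apply hne
            rw [Finsupp.sub_apply, hval2, sub_self]
          · exact hlt
        have hrank : ∀ τ ∈ (w - w').support,
            (Finset.univ.filter (fun τ' : S x z => τ' ≤ τ)).card
              < (Finset.univ.filter (fun τ' : S x z => τ' ≤ σ)).card := by
          intro τ hτ
          refine Finset.card_lt_card ?_
          constructor
          · intro τ' hτ'
            rw [Finset.mem_filter] at hτ' ⊢
            exact ⟨hτ'.1, le_trans hτ'.2 (le_of_lt (hsub τ hτ))⟩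
          · intro hcon
            have hσin : σ ∈ Finset.univ.filter (fun τ' : S x z => τ' ≤ σ) :=
              Finset.mem_filter.mpr ⟨Finset.mem_univ _, le_refl _⟩
            have := hcon hσin
            rw [Finset.mem_filter] at this
            exact absurd (lt_of_le_of_lt this.2 (hsub τ hτ)) (lt_irrefl _)
        have hv : w - w' ∈ P z :=
          ih _ (hwsupp σ hσmem) (w - w') hvQ hrank
        have : w = (w - w') + w' := (sub_add_cancel w w').symm
        rw [this]
        exact add_mem hv hw'P
  intro w hw
  refine main ((Finset.univ : Finset (S x z)).card + 1) w hw fun τ _ => ?_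
  exact Nat.lt_succ_of_le (Finset.card_filter_le _ _)

end OMCore

end ModuleCore2
section ModuleCore3

open CategoryTheory

namespace OMCore

variable {R : Type u} [Ring R] [Finite R]
variable {k : Type u} [CommRing k]
variable {r : ℕ} (x : Fin r → OM R)
set_option linter.unusedSectionVars false

theorem lam_pwo : (Set.univ : Set (Σ z : OM R, S x z)).PartiallyWellOrderedOn (lamLE x) := by
  classical
  intro seq0
  let seq := fun t => (seq0 t).1
  have hfib : ∃ i0 : Fin r, {t | (seq t).2.1 = i0}.Infinite := by
    obtain ⟨i0, hi0⟩ := Finite.exists_infinite_fiber (fun t => (seq t).2.1)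
    exact ⟨i0, Set.infinite_coe_iff.mp hi0⟩
  obtain ⟨i0, hinf⟩ := hfib
  set p : ℕ → Prop := fun t => (seq t).2.1 = i0 with hp
  have hinf' : (setOf p).Infinite := hinf
  have hmem : ∀ t, (seq (Nat.nth p t)).2.1 = i0 := fun t => Nat.nth_mem_of_infinite hinf' t
  have hmono : StrictMono (Nat.nth p) := Nat.nth_strictMono hinf'
  set s' : ℕ → Σ i : ℕ, (x i0 ⟶ OM.mk R i) := fun t =>
    ⟨OM.len (seq (Nat.nth p t)).1,
      eqToHom (congrArg x (hmem t).symm) ≫ (seq (Nat.nth p t)).2.2⟩ with hs'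
  obtain ⟨a, b, hab, h, heq⟩ := OM.wqo (x i0) s'
  refine ⟨Nat.nth p a, Nat.nth p b, hmono hab, ?_⟩
  show lamLE x (seq (Nat.nth p a)) (seq (Nat.nth p b))
  refine ⟨(hmem b).trans (hmem a).symm, h, ?_⟩
  have heq' : eqToHom (congrArg x (hmem b).symm) ≫ (seq (Nat.nth p b)).2.2
      = (eqToHom (congrArg x (hmem a).symm) ≫ (seq (Nat.nth p a)).2.2) ≫ h := heq
  have heq'' := congrArg (fun t => eqToHom (congrArg x (hmem b)) ≫ t) heq'
  simp only [eqToHom_trans_assoc, eqToHom_refl, Category.id_comp, Category.assoc] at heq''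
  rw [heq'']

variable (M : OM R ⥤ ModuleCat.{u} k) (mg : ∀ i, M.obj (x i))

theorem core_fg [IsNoetherianRing k]
    (hMfg : ∀ z : OM R, Function.Surjective (piM x M mg z))
    (Nsub : ∀ z : OM R, Submodule k (M.obj z))
    (hNcl : ∀ (z z' : OM R) (h : z ⟶ z') v, v ∈ Nsub z → M.map h v ∈ Nsub z') :
    ∃ (r' : ℕ) (zs : Fin r' → OM R) (vs : ∀ j, M.obj (zs j)),
      (∀ j, vs j ∈ Nsub (zs j)) ∧
      ∀ (y : OM R) (v : M.obj y), v ∈ Nsub y →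
        v ∈ Submodule.span k
          {u : M.obj y | ∃ (j : Fin r') (h : zs j ⟶ y), M.map h (vs j) = u} := by
  classical
  set N' : ∀ z : OM R, Submodule k (S x z →₀ k) :=
    fun z => (Nsub z).comap (piM x M mg z) with hN'
  have hN'cl : ClosedFam x N' := by
    intro z z' h w hw
    show piM x M mg z' (Sh k x h w) ∈ Nsub z'
    rw [piM_shift]
    exact hNcl _ _ h _ hw
  set SpanF : List (Σ z : OM R, (S x z →₀ k)) → ∀ z : OM R, Submodule k (S x z →₀ k) :=
    fun L z => Submodule.span k {w | ∃ p ∈ L, ∃ h : p.1 ⟶ z, Sh k x h p.2 = w} with hSpanF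
  have hSpanF_closed : ∀ L, ClosedFam x (SpanF L) := by
    intro L z z' h w hw
    induction hw using Submodule.span_induction with
    | mem w hwmem =>
      obtain ⟨q, hq, h0, rfl⟩ := hwmem
      refine Submodule.subset_span ⟨q, hq, h0 ≫ h, ?_⟩
      rw [← Sh_comp]
    | zero => rw [map_zero]; exact zero_mem _
    | add a b _ _ ha hb => rw [map_add]; exact add_mem ha hb
    | smul c a _ ha => rw [map_smul]; exact Submodule.smul_mem _ c ha
  have hSpanF_le : ∀ L, (∀ p ∈ L, p.2 ∈ N' p.1) → ∀ z, SpanF L z ≤ N' z := by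
    intro L hL z
    refine Submodule.span_le.mpr ?_
    rintro w ⟨q, hq, h0, rfl⟩
    exact hN'cl _ _ h0 _ (hL q hq)
  have hSpanF_mono : ∀ (L : List _) (q) (z : OM R), SpanF L z ≤ SpanF (L ++ [q]) z := by
    intro L q z
    refine Submodule.span_mono ?_
    rintro w ⟨p, hp, h0, rfl⟩
    exact ⟨p, List.mem_append_left _ hp, h0, rfl⟩
  have hgen : ∃ L : List (Σ z : OM R, (S x z →₀ k)),
      (∀ p ∈ L, p.2 ∈ N' p.1) ∧ ∀ z, N' z ≤ SpanF L z := by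
    by_contra hno
    push_neg at hno
    have hstep : ∀ L : {L : List (Σ z : OM R, (S x z →₀ k)) // ∀ p ∈ L, p.2 ∈ N' p.1},
        ∃ q : Σ z : OM R, (S x z →₀ k), q.2 ∈ N' q.1 ∧ q.2 ∉ SpanF L.1 q.1 := by
      intro L
      obtain ⟨z, hz⟩ := hno L.1 L.2
      obtain ⟨w, hw1, hw2⟩ := SetLike.not_le_iff_exists.mp hz
      exact ⟨⟨z, w⟩, hw1, hw2⟩
    set seqL : ℕ → {L : List (Σ z : OM R, (S x z →₀ k)) // ∀ p ∈ L, p.2 ∈ N' p.1} :=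
      fun t => Nat.rec ⟨[], by intro p hp; simp at hp⟩
        (fun _ ih => ⟨ih.1 ++ [(hstep ih).choose], by
          intro q hq
          rcases List.mem_append.mp hq with h1 | h1
          · exact ih.2 q h1
          · rw [List.mem_singleton] at h1
            rw [h1]
            exact (hstep ih).choose_spec.1⟩) t with hseqL
    have hsucc : ∀ t, (seqL (t+1)).1 = (seqL t).1 ++ [(hstep (seqL t)).choose] := fun t => rfl
    set Xf : ℕ → ∀ z : OM R, Submodule k (S x z →₀ k) := fun t => SpanF (seqL t).1 with hXf
    have hXmono : ∀ t z, Xf t z ≤ Xf (t+1) z := by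
      intro t z
      rw [hXf]
      show SpanF (seqL t).1 z ≤ SpanF (seqL (t+1)).1 z
      rw [hsucc t]
      exact hSpanF_mono _ _ z
    have hXmono' : ∀ t t', t ≤ t' → ∀ z, Xf t z ≤ Xf t' z := by
      intro t t' htt'
      induction htt' with
      | refl => exact fun z => le_refl _
      | step h ih =>
        intro z
        exact le_trans (ih z) (hXmono _ z)
    have hstrict : ∀ t, ∃ lam, ¬ (JF x (Xf (t+1)) lam ≤ JF x (Xf t) lam) := by
      intro t
      by_contra hc
      push_neg at hc
      have heq := fam_eq_of_JF_eq x (hXmono t) hc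
      have hq := (hstep (seqL t)).choose_spec
      apply hq.2
      refine heq _ ?_
      show (hstep (seqL t)).choose.2 ∈ SpanF (seqL (t+1)).1 _
      rw [hsucc t]
      refine Submodule.subset_span ?_
      refine ⟨(hstep (seqL t)).choose, List.mem_append_right _ (List.mem_singleton_self _),
        𝟙 _, ?_⟩
      rw [Sh_id]
    set lam : ℕ → Σ z : OM R, S x z := fun t => (hstrict t).choose with hlam
    haveI : IsTrans (Σ z : OM R, S x z) (lamLE x) := ⟨fun _ _ _ => lamLE_trans x⟩
    haveI : IsRefl (Σ z : OM R, S x z) (lamLE x) := ⟨lamLE_refl x⟩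
    haveI : IsPreorder (Σ z : OM R, S x z) (lamLE x) :=
      { refl := lamLE_refl x, trans := fun _ _ _ => lamLE_trans x }
    obtain ⟨g, hg⟩ := (lam_pwo x).exists_monotone_subseq (f := lam) (fun _ => Set.mem_univ _)
    have hmonoJ : Monotone (fun j => JF x (Xf (g j)) (lam (g j))) := by
      intro j j' hjj'
      refine le_trans (JF_mono_fam x (fun z => hXmono' _ _ (g.monotone hjj') z) _) ?_
      exact JF_mono_lam x (hSpanF_closed _) (hg j j' hjj')
    obtain ⟨n0, hstab⟩ := monotone_stabilizes_iff_noetherian.mpr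
      (by rwa [← isNoetherianRing_iff]) ⟨fun j => JF x (Xf (g j)) (lam (g j)), hmonoJ⟩
    have hlt := (hstrict (g n0)).choose_spec
    obtain ⟨c, hc1, hc2⟩ := SetLike.not_le_iff_exists.mp hlt
    have hcin : c ∈ JF x (Xf (g (n0+1))) (lam (g (n0+1))) := by
      have s1 : JF x (Xf (g n0 + 1)) (lam (g n0)) ≤ JF x (Xf (g (n0+1))) (lam (g n0)) :=
        JF_mono_fam x (fun z => hXmono' _ _ (Nat.succ_le_of_lt (g.strictMono (Nat.lt_succ_self n0))) z) _
      have s2 : JF x (Xf (g (n0+1))) (lam (g n0)) ≤ JF x (Xf (g (n0+1))) (lam (g (n0+1))) :=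
        JF_mono_lam x (hSpanF_closed _) (hg n0 (n0+1) (Nat.le_succ n0))
      exact s2 (s1 hc1)
    have := hstab (n0+1) (Nat.le_succ n0)
    rw [OrderHom.coe_mk] at this
    rw [← this] at hcin
    exact hc2 hcin
  obtain ⟨L, hL, hLgen⟩ := hgen
  refine ⟨L.length, fun j => (L.get j).1, fun j => piM x M mg _ (L.get j).2, ?_, ?_⟩
  · intro j
    exact hL (L.get j) (List.get_mem L j)
  · intro y v hv
    obtain ⟨w, rfl⟩ := hMfg y v
    have hwN' : w ∈ N' y := hv
    have hwspan : w ∈ SpanF L y := hLgen y hwN'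
    have hmap := Submodule.mem_map_of_mem (f := piM x M mg y) hwspan
    rw [hSpanF, Submodule.map_span] at hmap
    refine Submodule.span_mono ?_ hmap
    rintro u ⟨w', ⟨p, hp, h0, rfl⟩, rfl⟩
    obtain ⟨j, rfl⟩ := List.mem_iff_get.mp hp
    exact ⟨j, h0, (piM_shift x M mg h0 _).symm⟩

end OMCore

end ModuleCore3
/-- Let `R` be a finite ring.  Then the category `OVI(R)` is quasi-Gröbner; in
particular, for every noetherian commutative ring `k`, the category of `OVI(R)`-modules
over `k` is locally noetherian. -/
theorem ovi_isQuasiGrobner_of_finite (R : Type u) [Ring R] [Finite R] :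
    IsQuasiGrobner (OVI R) ∧
      ∀ (k : Type u) [CommRing k], IsNoetherianRing k →
        OVIModulesLocallyNoetherian R k := by
  classical
  refine ⟨OVI.isQuasiGrobner R, ?_⟩
  intro k _ hk
  haveI : IsNoetherianRing k := hk
  intro M N ι hmono hMfg
  haveI := hmono
  -- pointwise injectivity of the mono
  have hinj : ∀ y : OVI R, Function.Injective (ι.app y) := by
    intro y
    haveI : Mono (ι.app y) := (NatTrans.mono_iff_mono_app ι).mp hmono y
    exact (ModuleCat.mono_iff_injective (ι.app y)).mp this
  have hnat : ∀ (Y Z : OVI R) (f : Y ⟶ Z) (v : N.obj Y),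
      ι.app Z (N.map f v) = M.map f (ι.app Y v) := by
    intro Y Z f v
    exact LinearMap.congr_fun (congrArg ModuleCat.Hom.hom (ι.naturality f)) v
  -- finite generation data of M
  obtain ⟨r0, x0, m0, hspan⟩ := hMfg
  -- property (F) data
  have hPF := OM.propertyF (R := R)
  choose nF xF tF hF using hPF
  -- assemble the combined generating data over OM R
  set Ix := Σ i : Fin r0, Fin (nF (x0 i)) with hIx
  letI : Fintype Ix := Fintype.ofFinite _
  set e := Fintype.equivFin Ix with he
  set M' : OM R ⥤ ModuleCat.{u} k := OM.toOVI R ⋙ M with hM'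
  set Xs : Ix → OM R := fun q => xF (x0 q.1) q.2 with hXs
  set Mg : ∀ q : Ix, M'.obj (Xs q) := fun q => M.map (tF (x0 q.1) q.2) (m0 q.1) with hMg
  set xs : Fin (Fintype.card Ix) → OM R := fun j => Xs (e.symm j) with hxs
  set mg : ∀ j, M'.obj (xs j) := fun j => Mg (e.symm j) with hmg
  -- surjectivity of the structure maps
  have hsurj : ∀ z : OM R, Function.Surjective (OMCore.piM xs M' mg z) := by
    intro z
    rw [← LinearMap.range_eq_top]
    unfold OMCore.piM
    rw [Finsupp.range_linearCombination]
    rw [eq_top_iff]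
    intro v _
    have hv : v ∈ Submodule.span k
        {v : M.obj ((OM.toOVI R).obj z) | ∃ (i : Fin r0) (f : x0 i ⟶ (OM.toOVI R).obj z),
          M.map f (m0 i) = v} := by
      rw [hspan ((OM.toOVI R).obj z)]
      trivial
    refine Submodule.span_le.mpr ?_ hv
    rintro u ⟨i, f, rfl⟩
    obtain ⟨l, g, hfg⟩ := hF (x0 i) z f
    refine Submodule.subset_span ?_
    have hq : e.symm (e ⟨i, l⟩) = ⟨i, l⟩ := e.symm_apply_apply _
    refine ⟨⟨e ⟨i, l⟩, eqToHom (congrArg Xs hq) ≫ g⟩, ?_⟩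
    show M'.map (eqToHom (congrArg Xs hq) ≫ g) (Mg (e.symm (e ⟨i, l⟩))) = M.map f (m0 i)
    generalize e.symm (e ⟨i, l⟩) = q at hq ⊢
    subst hq
    simp only [eqToHom_refl, Category.id_comp]
    show M.map ((OM.toOVI R).map g) (M.map (tF (x0 i) l) (m0 i)) = M.map f (m0 i)
    rw [hfg, M.map_comp]
    rfl
  -- the submodule family given by `N`
  set Nsub : ∀ z : OM R, Submodule k (M'.obj z) :=
    fun z => LinearMap.range (ι.app ((OM.toOVI R).obj z)).hom with hNsub
  have hNcl : ∀ (z z' : OM R) (h : z ⟶ z') v, v ∈ Nsub z → M'.map h v ∈ Nsub z' := by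
    rintro z z' h v ⟨nv, rfl⟩
    refine ⟨N.map ((OM.toOVI R).map h) nv, ?_⟩
    exact hnat _ _ ((OM.toOVI R).map h) nv
  obtain ⟨r', zs, vs, hvs, hgen⟩ := OMCore.core_fg xs M' mg hsurj Nsub hNcl
  -- pull the generators back along the mono
  have hns : ∀ j, ∃ nj : N.obj ((OM.toOVI R).obj (zs j)), ι.app _ nj = vs j := fun j => hvs j
  choose ns hnsspec using hns
  refine ⟨r', fun j => (OM.toOVI R).obj (zs j), ns, ?_⟩
  intro y
  rw [eq_top_iff]
  intro n _
  set yO : OM R := OM.mk R (OVI.len y) with hyO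
  have h1 : ι.app ((OM.toOVI R).obj yO) n ∈ Nsub yO := ⟨n, rfl⟩
  have h2 := hgen yO _ h1
  have h3 : {u : M'.obj yO | ∃ (j : Fin r') (h : zs j ⟶ yO), M'.map h (vs j) = u} ⊆
      (ι.app ((OM.toOVI R).obj yO)) ''
        {v : N.obj ((OM.toOVI R).obj yO) |
          ∃ (j : Fin r') (f : (OM.toOVI R).obj (zs j) ⟶ (OM.toOVI R).obj yO),
            N.map f (ns j) = v} := by
    rintro u ⟨j, h, rfl⟩
    refine ⟨N.map ((OM.toOVI R).map h) (ns j), ⟨j, (OM.toOVI R).map h, rfl⟩, ?_⟩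
    rw [hnat _ _ ((OM.toOVI R).map h) (ns j), hnsspec j]
    rfl
  have h4 := Submodule.span_mono h3 h2
  have h4' : Submodule.map (ι.app ((OM.toOVI R).obj yO)).hom
      (Submodule.span k {v : N.obj ((OM.toOVI R).obj yO) |
        ∃ (j : Fin r') (f : (OM.toOVI R).obj (zs j) ⟶ (OM.toOVI R).obj yO),
          N.map f (ns j) = v})
      = Submodule.span k ((ι.app ((OM.toOVI R).obj yO)) ''
        {v : N.obj ((OM.toOVI R).obj yO) |
          ∃ (j : Fin r') (f : (OM.toOVI R).obj (zs j) ⟶ (OM.toOVI R).obj yO),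
            N.map f (ns j) = v}) :=
    Submodule.map_span _ _
  rw [← h4'] at h4
  obtain ⟨nn, hnn, hie⟩ := h4
  have h5 : nn = n := hinj ((OM.toOVI R).obj yO) hie
  rw [← h5]
  exact hnn
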